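/- Recurrence solution: Let b ≥ 2 and let T : ℕ × ℕ × ℕ → ℝ satisfy T(n,h,X) ≤ max over all (h₁,…,h_b, X₁,…,X_b) with Σᵢ hᵢ ≤ h + b and Σᵢ Xᵢ ≤ X of [ Σᵢ T(n/b, hᵢ, Xᵢ) + C·(n + h·log(h+2) + f(b)·X) ], with base case T(n,h,X) ≤ C·(n + h·log(h+2) + f(b)·X) when n ≤ b. Then T(n,h,X) ≤ C'·(n + h·log(h+2) + f(b)·X)·(log n / log b + 1) for a constant C' depending only on C (and assuming f(b) ≥ 1, log b ≥ 1). -/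

import Mathlib

open scoped BigOperators

lemma nat_sq_le_two_pow : ∀ m : ℕ, m ^ 2 ≤ 2 * 2 ^ m := by
  intro m
  induction m with
  | zero => norm_num
  | succ n ih =>
    have h2 : n + 1 ≤ 2 ^ n := Nat.lt_two_pow_self (n := n)
    have e : (2:ℕ) ^ (n+1) = 2 * 2 ^ n := by ring
    nlinarith [ih, h2, e]

lemma master_nat (b m : ℕ) (hb : 2 ≤ b) (hm : 2 ≤ m) : m ^ 2 * b ^ 2 ≤ 8 * b ^ m := by
  obtain ⟨k, rfl⟩ : ∃ k, m = k + 2 := ⟨m - 2, by omega⟩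
  have h1 : (k+2)^2 ≤ 2 * 2^(k+2) := nat_sq_le_two_pow _
  have h2 : 2^k ≤ b^k := Nat.pow_le_pow_left hb k
  calc (k+2)^2 * b^2 ≤ (2*2^(k+2)) * b^2 := Nat.mul_le_mul_right _ h1
    _ = 8 * (2^k * b^2) := by ring
    _ ≤ 8 * (b^k * b^2) := Nat.mul_le_mul_left _ (Nat.mul_le_mul_right _ h2)
    _ = 8 * b^(k+2) := by ring

set_option maxHeartbeats 1000000 in
/-- Solution of the divide-and-conquer recurrence.  Suppose `T` satisfies
`T(n,h,X) ≤ max Σᵢ T(n/b, hᵢ, Xᵢ) + C·(n + h·log(h+2) + f(b)·X)` over all tuples with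
`Σ hᵢ ≤ h + b` and `Σ Xᵢ ≤ X` (equivalently, for each `(n,h,X)` there is such a tuple
realizing the bound), with base case `T(n,h,X) ≤ C·(n + h·log(h+2) + f(b)·X)` for
`n ≤ b`.  Then `T(n,h,X) ≤ C'·(n + h·log(h+2) + f(b)·X)·(log n / log b + 1)` for a
constant `C'` depending only on `C` (here `b ≥ 2`, `f(b) ≥ 1`, `log` is the natural
logarithm, and `n` is a power of `b`). -/
theorem divide_and_conquer_recurrence (C : ℝ) (hC : 0 < C) :
    ∃ C' : ℝ, 0 < C' ∧
      ∀ (b : ℕ), 2 ≤ b →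
      ∀ (f : ℕ → ℝ), 1 ≤ f b →
      ∀ (T : ℕ → ℕ → ℕ → ℝ),
        (∀ n h X : ℕ, n ≤ b →
          T n h X ≤ C * ((n : ℝ) + h * Real.log (h + 2) + f b * X)) →
        (∀ n h X : ℕ, b < n →
          ∃ hs Xs : Fin b → ℕ,
            (∑ i, hs i) ≤ h + b ∧ (∑ i, Xs i) ≤ X ∧
            T n h X ≤ (∑ i, T (n / b) (hs i) (Xs i)) +
              C * ((n : ℝ) + h * Real.log (h + 2) + f b * X)) →
        ∀ n h X : ℕ, (∃ j : ℕ, n = b ^ j) → 1 ≤ n →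
          T n h X ≤ C' * ((n : ℝ) + h * Real.log (h + 2) + f b * X) *
            (Real.log n / Real.log b + 1) := by
  refine ⟨128 * C, by positivity, ?_⟩
  intro b hb f hf T hbase hrec
  have hb0 : 0 < b := by omega
  have hb1R : (1:ℝ) < (b:ℝ) := by exact_mod_cast hb.trans_lt' one_lt_two
  have hlogb : 0 < Real.log b := Real.log_pos hb1R
  have hf0 : (0:ℝ) ≤ f b := le_trans zero_le_one hf
  -- nonnegativity helpers
  have hlog_nn : ∀ k : ℕ, 0 ≤ Real.log ((k:ℝ) + 2) := by
    intro k
    apply Real.log_nonneg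
    have : (0:ℝ) ≤ (k:ℝ) := Nat.cast_nonneg k
    linarith
  -- generic base-case bound
  have hbase' : ∀ j h X : ℕ, b ^ j ≤ b →
      T (b ^ j) h X ≤
        2 * C * (64 * ((b ^ j : ℕ):ℝ) + h * Real.log (h + 2) + f b * X) * ((j:ℝ) + 1) := by
    intro j h X hle
    have h1 := hbase (b ^ j) h X hle
    set N : ℝ := ((b ^ j : ℕ):ℝ) with hN
    have hN0 : (0:ℝ) ≤ N := Nat.cast_nonneg _
    have hs0 : (0:ℝ) ≤ (h:ℝ) * Real.log ((h:ℝ) + 2) :=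
      mul_nonneg (Nat.cast_nonneg h) (hlog_nn h)
    have ht0 : (0:ℝ) ≤ f b * (X:ℝ) := mul_nonneg hf0 (Nat.cast_nonneg X)
    have hJ : (1:ℝ) ≤ (j:ℝ) + 1 := by
      have : (0:ℝ) ≤ (j:ℝ) := Nat.cast_nonneg j
      linarith
    have step1 : C * (N + (h:ℝ) * Real.log ((h:ℝ)+2) + f b * X) ≤
        2 * C * (64 * N + (h:ℝ) * Real.log ((h:ℝ)+2) + f b * X) := by
      linarith only [mul_nonneg hC.le hN0, mul_nonneg hC.le hs0, mul_nonneg hC.le ht0]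
    have step2 : 2 * C * (64 * N + (h:ℝ) * Real.log ((h:ℝ)+2) + f b * X) ≤
        2 * C * (64 * N + (h:ℝ) * Real.log ((h:ℝ)+2) + f b * X) * ((j:ℝ) + 1) := by
      have hpos : (0:ℝ) ≤ 2 * C * (64 * N + (h:ℝ) * Real.log ((h:ℝ)+2) + f b * X) := by
        have : (0:ℝ) ≤ 64 * N + (h:ℝ) * Real.log ((h:ℝ)+2) + f b * X := by linarith
        positivity
      exact le_mul_of_one_le_right hpos hJ
    calc T (b ^ j) h X ≤ _ := h1
      _ ≤ _ := step1.trans step2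
  -- key inductive claim
  have claim : ∀ j h X : ℕ,
      T (b ^ j) h X ≤
        2 * C * (64 * ((b ^ j : ℕ):ℝ) + h * Real.log (h + 2) + f b * X) * ((j:ℝ) + 1) := by
    intro j
    induction j with
    | zero =>
      intro h X
      exact hbase' 0 h X (by rw [pow_zero]; omega)
    | succ j ih =>
      intro h X
      by_cases hsize : b ^ (j+1) ≤ b
      · exact hbase' (j+1) h X hsize
      push_neg at hsize
      have hj1 : 1 ≤ j := by
        rcases Nat.eq_zero_or_pos j with rfl | h'
        · simp at hsize
        · exact h'
      obtain ⟨hs, Xs, hH, hXs, hT⟩ := hrec (b ^ (j+1)) h X hsize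
      have hdiv : b ^ (j+1) / b = b ^ j := by
        rw [pow_succ, Nat.mul_div_cancel _ hb0]
      rw [hdiv] at hT
      -- abbreviations
      set N : ℝ := ((b ^ (j+1) : ℕ):ℝ) with hNdef
      have hNpow : N = (b:ℝ) ^ (j+1) := by push_cast [hNdef]; ring
      have hN0 : (0:ℝ) ≤ N := Nat.cast_nonneg _
      set s : ℝ := (h:ℝ) * Real.log ((h:ℝ) + 2) with hsdef
      set t : ℝ := f b * (X:ℝ) with htdef
      have hs0 : (0:ℝ) ≤ s := mul_nonneg (Nat.cast_nonneg h) (hlog_nn h)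
      have ht0 : (0:ℝ) ≤ t := mul_nonneg hf0 (Nat.cast_nonneg X)
      set H : ℕ := ∑ i, hs i with hHdef
      set Y : ℕ := ∑ i, Xs i with hYdef
      -- sum of the inductive bounds
      have hsum : (∑ i, T (b ^ j) (hs i) (Xs i)) ≤
          2 * C * ((j:ℝ) + 1) *
            ((b:ℝ) * (64 * ((b ^ j : ℕ):ℝ)) +
              (∑ i, ((hs i : ℕ):ℝ) * Real.log (((hs i : ℕ):ℝ) + 2)) + f b * (Y:ℝ)) := by
        calc (∑ i, T (b ^ j) (hs i) (Xs i))
            ≤ ∑ i, 2 * C * (64 * ((b ^ j : ℕ):ℝ) +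
                (hs i) * Real.log ((hs i) + 2) + f b * (Xs i)) * ((j:ℝ) + 1) :=
              Finset.sum_le_sum fun i _ => ih (hs i) (Xs i)
          _ = ∑ i, 2 * C * ((j:ℝ) + 1) * ((64 * ((b ^ j : ℕ):ℝ) +
                (hs i) * Real.log ((hs i) + 2) + f b * (Xs i))) := by
              refine Finset.sum_congr rfl fun i _ => by ring
          _ = 2 * C * ((j:ℝ) + 1) * (∑ i, (64 * ((b ^ j : ℕ):ℝ) +
                (hs i) * Real.log ((hs i) + 2) + f b * (Xs i))) := by
              rw [← Finset.mul_sum]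
          _ = 2 * C * ((j:ℝ) + 1) *
              ((b:ℝ) * (64 * ((b ^ j : ℕ):ℝ)) +
                (∑ i, ((hs i : ℕ):ℝ) * Real.log (((hs i : ℕ):ℝ) + 2)) + f b * (Y:ℝ)) := by
              congr 1
              rw [Finset.sum_add_distrib, Finset.sum_add_distrib, Finset.sum_const,
                Finset.card_univ, Fintype.card_fin, ← Finset.mul_sum]
              push_cast [hYdef]
              ring
      -- superadditivity of x ↦ x log (x+2)
      have hsup : (∑ i, ((hs i : ℕ):ℝ) * Real.log (((hs i : ℕ):ℝ) + 2)) ≤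
          (H:ℝ) * Real.log ((H:ℝ) + 2) := by
        have hle : ∀ i ∈ Finset.univ (α := Fin b), ((hs i : ℕ):ℝ) * Real.log (((hs i : ℕ):ℝ) + 2)
            ≤ ((hs i : ℕ):ℝ) * Real.log ((H:ℝ) + 2) := by
          intro i _
          have hiH : hs i ≤ H := Finset.single_le_sum (fun i _ => Nat.zero_le _) (Finset.mem_univ i)
          have : Real.log (((hs i : ℕ):ℝ) + 2) ≤ Real.log ((H:ℝ) + 2) := by
            apply Real.log_le_log (by positivity)
            have : ((hs i : ℕ):ℝ) ≤ (H:ℝ) := by exact_mod_cast hiH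
            linarith
          exact mul_le_mul_of_nonneg_left this (Nat.cast_nonneg _)
        calc (∑ i, ((hs i : ℕ):ℝ) * Real.log (((hs i : ℕ):ℝ) + 2))
            ≤ ∑ i, ((hs i : ℕ):ℝ) * Real.log ((H:ℝ) + 2) := Finset.sum_le_sum hle
          _ = (H:ℝ) * Real.log ((H:ℝ) + 2) := by
              rw [← Finset.sum_mul]; congr 1; push_cast [hHdef]; ring
      -- monotonicity of x ↦ x log (x+2) : H ≤ h + b
      have hmono : (H:ℝ) * Real.log ((H:ℝ) + 2) ≤
          ((h:ℝ) + (b:ℝ)) * Real.log ((h:ℝ) + (b:ℝ) + 2) := by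
        have hHhb : (H:ℝ) ≤ (h:ℝ) + (b:ℝ) := by exact_mod_cast hH
        have hH0 : (0:ℝ) ≤ (H:ℝ) := Nat.cast_nonneg _
        have hl : Real.log ((H:ℝ) + 2) ≤ Real.log ((h:ℝ) + (b:ℝ) + 2) :=
          Real.log_le_log (by positivity) (by linarith)
        have hl0 : 0 ≤ Real.log ((H:ℝ) + 2) := Real.log_nonneg (by linarith)
        have hb0R : (0:ℝ) ≤ (h:ℝ) + (b:ℝ) := by positivity
        exact mul_le_mul hHhb hl hl0 hb0R
      have hYX : f b * (Y:ℝ) ≤ t := by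
        rw [htdef]
        exact mul_le_mul_of_nonneg_left (by exact_mod_cast hXs) hf0
      -- set P := (h+b) log(h+b+2)
      set P : ℝ := ((h:ℝ) + (b:ℝ)) * Real.log ((h:ℝ) + (b:ℝ) + 2) with hPdef
      -- bound P ≤ s + b + b log(h+2) + b log(b+1)
      have hP : P ≤ s + (b:ℝ) + (b:ℝ) * Real.log ((h:ℝ) + 2) + (b:ℝ) * Real.log ((b:ℝ) + 1) := by
        have hh2 : (0:ℝ) < (h:ℝ) + 2 := by positivity
        have hq : (0:ℝ) < ((h:ℝ) + (b:ℝ) + 2) / ((h:ℝ) + 2) := by positivity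
        have l1 : Real.log ((h:ℝ) + (b:ℝ) + 2) ≤ Real.log ((h:ℝ) + 2) + (b:ℝ) / ((h:ℝ) + 2) := by
          have e : (h:ℝ) + (b:ℝ) + 2 = ((h:ℝ) + 2) * (((h:ℝ) + (b:ℝ) + 2) / ((h:ℝ) + 2)) := by
            field_simp
          rw [e, Real.log_mul (by positivity) (by positivity)]
          have := Real.log_le_sub_one_of_pos hq
          have e2 : ((h:ℝ) + (b:ℝ) + 2) / ((h:ℝ) + 2) - 1 = (b:ℝ) / ((h:ℝ) + 2) := by
            field_simp
            ring
          linarith [this.trans_eq e2]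
        have l2 : Real.log ((h:ℝ) + (b:ℝ) + 2) ≤ Real.log ((h:ℝ) + 2) + Real.log ((b:ℝ) + 1) := by
          rw [← Real.log_mul (by positivity) (by positivity)]
          apply Real.log_le_log (by positivity)
          nlinarith [Nat.cast_nonneg (α := ℝ) h, Nat.cast_nonneg (α := ℝ) b]
        have hdivb : (h:ℝ) * ((b:ℝ) / ((h:ℝ) + 2)) ≤ (b:ℝ) := by
          rw [mul_div_assoc']
          rw [div_le_iff₀ hh2]
          nlinarith [Nat.cast_nonneg (α := ℝ) b, Nat.cast_nonneg (α := ℝ) h]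
        have hb0R : (0:ℝ) ≤ (b:ℝ) := Nat.cast_nonneg b
        have hh0R : (0:ℝ) ≤ (h:ℝ) := Nat.cast_nonneg h
        have p1 : (h:ℝ) * Real.log ((h:ℝ) + (b:ℝ) + 2) ≤ s + (b:ℝ) := by
          have := mul_le_mul_of_nonneg_left l1 hh0R
          rw [hsdef]
          have expand : (h:ℝ) * (Real.log ((h:ℝ) + 2) + (b:ℝ) / ((h:ℝ) + 2)) =
              (h:ℝ) * Real.log ((h:ℝ) + 2) + (h:ℝ) * ((b:ℝ) / ((h:ℝ) + 2)) := by ring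
          linarith only [this, hdivb, expand.le, expand.ge]
        have p2 : (b:ℝ) * Real.log ((h:ℝ) + (b:ℝ) + 2) ≤
            (b:ℝ) * Real.log ((h:ℝ) + 2) + (b:ℝ) * Real.log ((b:ℝ) + 1) := by
          have := mul_le_mul_of_nonneg_left l2 hb0R
          linarith only [this]
        rw [hPdef]
        have expand : ((h:ℝ) + (b:ℝ)) * Real.log ((h:ℝ) + (b:ℝ) + 2) =
            (h:ℝ) * Real.log ((h:ℝ) + (b:ℝ) + 2) + (b:ℝ) * Real.log ((h:ℝ) + (b:ℝ) + 2) := by ring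
        linarith only [p1, p2, expand.le, expand.ge]
      -- the three counting estimates, m := j + 1 ≥ 2
      have hm2 : 2 ≤ j + 1 := by omega
      have master := master_nat b (j+1) hb hm2
      have masterR : ((j:ℝ)+1)^2 * (b:ℝ)^2 ≤ 8 * N := by
        rw [hNpow]
        exact_mod_cast master
      have hmR : (2:ℝ) ≤ (j:ℝ) + 1 := by exact_mod_cast hm2
      have hbR : (2:ℝ) ≤ (b:ℝ) := by exact_mod_cast hb
      set m : ℝ := (j:ℝ) + 1 with hmdef
      have hm0 : (0:ℝ) ≤ m := by linarith only [hmR]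
      have hb0R : (0:ℝ) ≤ (b:ℝ) := Nat.cast_nonneg b
      have h2m : 2 * m ≤ m ^ 2 := by nlinarith [hmR]
      have h2b : (b:ℝ) ≤ (b:ℝ) ^ 2 := by nlinarith [hbR]
      have q1 : 2 * m * (b:ℝ) ≤ m ^ 2 * (b:ℝ) := mul_le_mul_of_nonneg_right h2m hb0R
      have q2 : m ^ 2 * (b:ℝ) ≤ m ^ 2 * (b:ℝ) ^ 2 := mul_le_mul_of_nonneg_left h2b (sq_nonneg m)
      have e1 : 2 * m * (b:ℝ) ≤ 8 * N := by linarith only [q1, q2, masterR]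
      have e2 : 2 * m * (b:ℝ) * Real.log ((b:ℝ) + 1) ≤ 8 * N := by
        have hlb : Real.log ((b:ℝ) + 1) ≤ (b:ℝ) := by
          have := Real.log_le_sub_one_of_pos (x := (b:ℝ) + 1) (by positivity)
          linarith
        have hlb0 : 0 ≤ Real.log ((b:ℝ) + 1) := Real.log_nonneg (by linarith only [hb0R])
        have hmb0 : (0:ℝ) ≤ 2 * m * (b:ℝ) := by positivity
        have q3 : 2 * m * (b:ℝ) * Real.log ((b:ℝ) + 1) ≤ 2 * m * (b:ℝ) * (b:ℝ) :=
          mul_le_mul_of_nonneg_left hlb hmb0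
        have q4 : 2 * m * (b:ℝ) * (b:ℝ) ≤ m ^ 2 * (b:ℝ) * (b:ℝ) :=
          mul_le_mul_of_nonneg_right q1 hb0R
        have q5 : m ^ 2 * (b:ℝ) * (b:ℝ) = m ^ 2 * (b:ℝ) ^ 2 := by ring
        linarith only [q3, q4, q5.le, q5.ge, masterR]
      have e3 : 2 * m * (b:ℝ) * Real.log ((h:ℝ) + 2) ≤ 32 * N + s := by
        rcases le_or_gt (2 * (j+1) * b) h with hcase | hcase
        · -- h large: absorb into s
          have hcast : 2 * m * (b:ℝ) ≤ (h:ℝ) := by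
            have : ((2 * (j+1) * b : ℕ):ℝ) ≤ (h:ℝ) := by exact_mod_cast hcase
            push_cast at this
            rw [hmdef]; linarith
          have := mul_le_mul_of_nonneg_right hcast (hlog_nn h)
          rw [hsdef]
          linarith only [this, hN0]
        · -- h small: log(h+2) ≤ h+1 ≤ 2 m b
          have hlh : Real.log ((h:ℝ) + 2) ≤ (h:ℝ) + 1 := by
            have := Real.log_le_sub_one_of_pos (x := (h:ℝ) + 2) (by positivity)
            linarith
          have hcast : (h:ℝ) + 1 ≤ 2 * m * (b:ℝ) := by
            have : ((h:ℕ):ℝ) + 1 ≤ ((2 * (j+1) * b : ℕ):ℝ) := by exact_mod_cast hcase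
            push_cast at this
            rw [hmdef]; linarith
          have hmb0 : (0:ℝ) ≤ 2 * m * (b:ℝ) := by positivity
          have : 2 * m * (b:ℝ) * Real.log ((h:ℝ) + 2) ≤ 2 * m * (b:ℝ) * (2 * m * (b:ℝ)) := by
            have h1 : Real.log ((h:ℝ) + 2) ≤ 2 * m * (b:ℝ) := hlh.trans hcast
            exact mul_le_mul_of_nonneg_left h1 hmb0
          have e : 2 * m * (b:ℝ) * (2 * m * (b:ℝ)) = 4 * (m ^ 2 * (b:ℝ) ^ 2) := by ring
          linarith only [this, e.le, e.ge, masterR, hs0]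
      -- core estimate
      have hcore : 2 * m * (P - s) ≤ 48 * N + s := by
        have hδ : P - s ≤ (b:ℝ) + (b:ℝ) * Real.log ((h:ℝ) + 2) + (b:ℝ) * Real.log ((b:ℝ) + 1) := by
          linarith [hP]
        have h2m0 : (0:ℝ) ≤ 2 * m := by linarith [hmR]
        have := mul_le_mul_of_nonneg_left hδ h2m0
        have e : 2 * m * ((b:ℝ) + (b:ℝ) * Real.log ((h:ℝ) + 2) + (b:ℝ) * Real.log ((b:ℝ) + 1)) =
            2 * m * (b:ℝ) + 2 * m * (b:ℝ) * Real.log ((h:ℝ) + 2) +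
              2 * m * (b:ℝ) * Real.log ((b:ℝ) + 1) := by ring
        linarith only [e1, e2, e3, this, e.le, e.ge]
      -- final assembly
      have hmain : 2 * m * (64 * N + P + t) + (N + s + t) ≤
          2 * (64 * N + s + t) * (m + 1) := by
        nlinarith [hcore, hN0, hs0, ht0, hmR]
      have hchain : T (b ^ (j+1)) h X ≤
          2 * C * m * (64 * N + P + t) + C * (N + s + t) := by
        have step : (∑ i, T (b ^ j) (hs i) (Xs i)) ≤ 2 * C * m * (64 * N + P + t) := by
          refine hsum.trans ?_
          have hNb : (b:ℝ) * (64 * ((b ^ j : ℕ):ℝ)) = 64 * N := by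
            rw [hNpow]; push_cast; ring
          have hinner : (b:ℝ) * (64 * ((b ^ j : ℕ):ℝ)) +
              (∑ i, ((hs i : ℕ):ℝ) * Real.log (((hs i : ℕ):ℝ) + 2)) + f b * (Y:ℝ)
              ≤ 64 * N + P + t := by
            rw [hNb]
            have := hsup.trans hmono
            linarith [hYX, this]
          have hcoef : (0:ℝ) ≤ 2 * C * ((j:ℝ) + 1) := by positivity
          have := mul_le_mul_of_nonneg_left hinner hcoef
          rw [hmdef]
          linarith [this]
        calc T (b ^ (j+1)) h X ≤ _ := hT
          _ ≤ 2 * C * m * (64 * N + P + t) + C * (N + s + t) := by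
              have : C * (N + s + t) = C * ((b ^ (j+1) : ℕ) + (h:ℝ) * Real.log ((h:ℝ)+2) + f b * X) := by
                rw [hsdef, htdef]
              linarith [step]
      refine hchain.trans ?_
      have : 2 * C * m * (64 * N + P + t) + C * (N + s + t) =
          C * (2 * m * (64 * N + P + t) + (N + s + t)) := by ring
      rw [this]
      have goalC : C * (2 * m * (64 * N + P + t) + (N + s + t)) ≤
          C * (2 * (64 * N + s + t) * (m + 1)) := mul_le_mul_of_nonneg_left hmain hC.le
      refine goalC.trans_eq ?_
      push_cast
      rw [hmdef]
      ring
  -- conclude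
  intro n h X hpow hn
  obtain ⟨j, rfl⟩ := hpow
  have hclaim := claim j h X
  have hlogn : Real.log ((b ^ j : ℕ):ℝ) / Real.log b + 1 = (j:ℝ) + 1 := by
    have : ((b ^ j : ℕ):ℝ) = (b:ℝ) ^ j := by push_cast; ring
    rw [this, Real.log_pow, mul_div_assoc, div_self hlogb.ne', mul_one]
  rw [hlogn]
  refine hclaim.trans ?_
  have hN0 : (0:ℝ) ≤ ((b ^ j : ℕ):ℝ) := Nat.cast_nonneg _
  have hs0 : (0:ℝ) ≤ (h:ℝ) * Real.log ((h:ℝ) + 2) :=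
    mul_nonneg (Nat.cast_nonneg h) (hlog_nn h)
  have ht0 : (0:ℝ) ≤ f b * (X:ℝ) := mul_nonneg hf0 (Nat.cast_nonneg X)
  have hJ0 : (0:ℝ) ≤ (j:ℝ) + 1 := by positivity
  have key : 2 * C * (64 * ((b ^ j : ℕ):ℝ) + (h:ℝ) * Real.log ((h:ℝ)+2) + f b * X) ≤
      128 * C * (((b ^ j : ℕ):ℝ) + (h:ℝ) * Real.log ((h:ℝ)+2) + f b * X) := by
    linarith only [mul_nonneg hC.le hN0, mul_nonneg hC.le hs0, mul_nonneg hC.le ht0]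
  exact mul_le_mul_of_nonneg_right key hJ0
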